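/- Let ι be a finite type, θ₀ ∈ ℝ, and q : ι → ℝ → ℝ such that for each x ∈ ι: q(x, θ) > 0 for θ in a neighborhood of θ₀, θ ↦ q(x, θ) is differentiable at θ₀, and ∑_{x ∈ ι} q(x, θ) = 1 for all θ in a neighborhood of θ₀. Then for any F : ι → ℝ, the function θ ↦ ∑_{x ∈ ι} q(x, θ)·(F(x) − log q(x, θ)) is differentiable at θ₀ with derivative ∑_{x ∈ ι} q(x, θ₀) · (d/dθ)|_{θ=θ₀} log q(x, θ) · (F(x) − log q(x, θ₀)). -/

import Mathlib

open Filter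

/-- Likelihood-ratio (score function / REINFORCE) estimator identity for the ELBo gradient
(Equation 3 of the paper), finite-support case: the derivative of the ELBo
`θ ↦ ∑ x, q (x, θ) · (F x − log q (x, θ))` at `θ₀` equals
`∑ x, q (x, θ₀) · ∇_θ log q (x, θ₀) · (F x − log q (x, θ₀))`. -/
theorem likelihood_ratio_elbo_gradient {ι : Type*} [Fintype ι] (θ₀ : ℝ)
    (q : ι → ℝ → ℝ)
    (hpos : ∀ x, ∀ᶠ θ in nhds θ₀, 0 < q x θ)
    (hdiff : ∀ x, DifferentiableAt ℝ (fun θ => q x θ) θ₀)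
    (hnorm : ∀ᶠ θ in nhds θ₀, ∑ x, q x θ = 1) :
    ∀ F : ι → ℝ,
      HasDerivAt (fun θ => ∑ x, q x θ * (F x - Real.log (q x θ)))
        (∑ x, q x θ₀ * deriv (fun θ => Real.log (q x θ)) θ₀ * (F x - Real.log (q x θ₀)))
        θ₀ := by
  intro F
  set q' : ι → ℝ := fun x => deriv (fun θ => q x θ) θ₀ with hq'
  have hpos0 : ∀ x, 0 < q x θ₀ := fun x => (hpos x).self_of_nhds
  have hd : ∀ x, HasDerivAt (fun θ => q x θ) (q' x) θ₀ := fun x => (hdiff x).hasDerivAt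
  have hlog : ∀ x, HasDerivAt (fun θ => Real.log (q x θ)) (q' x / q x θ₀) θ₀ :=
    fun x => (hd x).log (hpos0 x).ne'
  have hterm : ∀ x, HasDerivAt (fun θ => q x θ * (F x - Real.log (q x θ)))
      (q' x * (F x - Real.log (q x θ₀)) - q' x) θ₀ := by
    intro x
    have h := (hd x).mul ((hasDerivAt_const θ₀ (F x)).sub (hlog x))
    convert h using 1
    have := (hpos0 x).ne'
    · rfl
    · rfl
    · rfl
    have e : q x θ₀ * (q' x / q x θ₀) = q' x := mul_div_cancel₀ _ (hpos0 x).ne'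
    simp only [Pi.sub_apply]
    linear_combination e
  have hsum : HasDerivAt (fun θ => ∑ x, q x θ * (F x - Real.log (q x θ)))
      (∑ x, (q' x * (F x - Real.log (q x θ₀)) - q' x)) θ₀ :=
    HasDerivAt.fun_sum fun x _ => hterm x
  have hzero : ∑ x, q' x = 0 := by
    have h1 : HasDerivAt (fun θ => ∑ x, q x θ) (∑ x, q' x) θ₀ :=
      HasDerivAt.fun_sum fun x _ => hd x
    have h2 : HasDerivAt (fun θ => ∑ x, q x θ) 0 θ₀ :=
      (hasDerivAt_const θ₀ (1:ℝ)).congr_of_eventuallyEq hnorm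
    exact h1.unique h2
  convert hsum using 1
  rw [Finset.sum_sub_distrib, hzero, sub_zero]
  refine Finset.sum_congr rfl fun x _ => ?_
  rw [(hlog x).deriv]
  field_simp [(hpos0 x).ne']
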